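/- For all natural numbers a, b, c with a + b + c ≥ 1, the type-I weight satisfies the triple-pancake identity W_ff(a+b+2, c) + W_ff(b+c+2, a) + W_ff(c+a+2, b) = W_ff(a+b, c) + W_ff(b+c, a) + W_ff(c+a, b). -/

import Mathlib

/-- The type-I weight assigned to an intersection of two folds. -/
noncomputable def Wff (n k : ℕ) : ℝ :=
  4 * ((n : ℝ) - (k : ℝ)) /
    (((n : ℝ) + (k : ℝ)) * ((n : ℝ) + (k : ℝ) + 2) * ((n : ℝ) + (k : ℝ) + 4))

lemma Wff_fin (S : ℝ) (hS : 0 < S) :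
    4 * (S + 6) / ((S + 2) * (S + 4) * (S + 6)) = 4 * S / (S * (S + 2) * (S + 4)) := by
  have h0 : S ≠ 0 := ne_of_gt hS
  have h2 : S + 2 ≠ 0 := by positivity
  have h4 : S + 4 ≠ 0 := by positivity
  have h6 : S + 6 ≠ 0 := by positivity
  field_simp

theorem Wff_triple_pancake (a b c : ℕ) (h : 1 ≤ a + b + c) :
    Wff (a + b + 2) c + Wff (b + c + 2) a + Wff (c + a + 2) b =
      Wff (a + b) c + Wff (b + c) a + Wff (c + a) b := by
  have hs : (0:ℝ) < (a:ℝ) + b + c := by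
    have : (1:ℝ) ≤ (a:ℝ) + b + c := by exact_mod_cast h
    linarith
  unfold Wff
  push_cast
  rw [show ((a:ℝ) + b + 2 + c) = ((a:ℝ) + b + c) + 2 by ring,
      show ((b:ℝ) + c + 2 + a) = ((a:ℝ) + b + c) + 2 by ring,
      show ((c:ℝ) + a + 2 + b) = ((a:ℝ) + b + c) + 2 by ring,
      show ((a:ℝ) + b + c + 2 + 2) = ((a:ℝ) + b + c) + 4 by ring,
      show ((a:ℝ) + b + c + 2 + 4) = ((a:ℝ) + b + c) + 6 by ring,
      show ((b:ℝ) + c + a) = (a:ℝ) + b + c by ring,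
      show ((c:ℝ) + a + b) = (a:ℝ) + b + c by ring]
  rw [← add_div, ← add_div, ← add_div, ← add_div]
  rw [show (4 * ((a:ℝ) + b + 2 - c) + 4 * (b + c + 2 - a) + 4 * (c + a + 2 - b))
        = 4 * (((a:ℝ) + b + c) + 6) by ring,
      show (4 * ((a:ℝ) + b - c) + 4 * (b + c - a) + 4 * (c + a - b))
        = 4 * ((a:ℝ) + b + c) by ring]
  exact Wff_fin _ hs
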